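/- Let l ≥ 5 be a prime number and let a be an integer with a^2 ≤ 4l (Hasse's bound), and set f(t) = t^2 − a·t + l. Then the limit lim_{n→∞} Res(t^{l^n} − 1, f(t)) exists in ℤ_l, and this limit equals 1 if and only if a = 0. -/

import Mathlib

open Filter Topology Polynomial

/-- The `n`-th cyclic resultant of `f ∈ ℤ[t]`, computed in `ℂ` as
`Res(t^n − 1, f(t)) = ∏_{ζ^n = 1} f(ζ)`, the product over all complex `n`-th roots of unity. -/
noncomputable def cyclicResultantC (n : ℕ) (f : Polynomial ℤ) : ℂ :=
  ((Polynomial.nthRoots n (1 : ℂ)).map (fun ζ => Polynomial.aeval ζ f)).prod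

/-- Integer trace sequence for `t^2 - a t + m`. -/
def trSeq (a m : ℤ) : ℕ → ℤ
  | 0 => 2
  | 1 => a
  | (k+2) => a * trSeq a m (k+1) - m * trSeq a m k

lemma trSeq_cast {R : Type*} [CommRing R] (a m : ℤ) (α β : R)
    (hs : α + β = (a : R)) (hp : α * β = (m : R)) :
    ∀ k, ((trSeq a m k : ℤ) : R) = α ^ k + β ^ k
  | 0 => by norm_num [trSeq]
  | 1 => by simp [trSeq, hs]
  | (k+2) => by
      have h1 := trSeq_cast a m α β hs hp (k+1)
      have h2 := trSeq_cast a m α β hs hp k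
      show ((a * trSeq a m (k+1) - m * trSeq a m k : ℤ) : R) = _
      push_cast
      rw [h1, h2, ← hs, ← hp]
      ring

lemma prod_root_sub (N : ℕ) (hN : N ≠ 0) (α : ℂ) :
    ((Polynomial.nthRoots N (1 : ℂ)).map (fun ζ => α - ζ)).prod = α ^ N - 1 := by
  have hmonic : (X ^ N - C (1 : ℂ)).Monic := monic_X_pow_sub_C 1 hN
  have hcard : Multiset.card (X ^ N - C (1:ℂ)).roots = (X ^ N - C (1:ℂ)).natDegree := by
    rw [natDegree_X_pow_sub_C]
    exact (Complex.isPrimitiveRoot_exp N hN).card_nthRoots_one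
  have h := congrArg (Polynomial.eval α)
    (prod_multiset_X_sub_C_of_monic_of_roots_card_eq hmonic hcard)
  simp only [eval_sub, eval_pow, eval_X, eval_C, eval_multiset_prod, Multiset.map_map,
    Function.comp] at h
  unfold Polynomial.nthRoots
  exact h


lemma cyclicResultantC_eq (l : ℕ) (a : ℤ) (f : Polynomial ℤ)
    (hf : f = Polynomial.X ^ 2 - Polynomial.C a * Polynomial.X + Polynomial.C (l : ℤ))
    (N : ℕ) (hN : N ≠ 0) :
    cyclicResultantC N f = (((l : ℤ) ^ N + 1 - trSeq a l N : ℤ) : ℂ) := by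
  obtain ⟨α, hα⟩ : ∃ α : ℂ, α ^ 2 - (a : ℂ) * α + (l : ℂ) = 0 := by
    have hdeg : (X ^ 2 - C (a : ℂ) * X + C ((l : ℕ) : ℂ)).degree = 2 := by
      compute_degree!
    obtain ⟨α, hα⟩ := Complex.exists_root (f := X ^ 2 - C (a : ℂ) * X + C ((l : ℕ) : ℂ))
      (by rw [hdeg]; norm_num)
    refine ⟨α, ?_⟩
    simpa [Polynomial.IsRoot] using hα
  set β : ℂ := (a : ℂ) - α with hβ
  have hs : α + β = ((a : ℤ) : ℂ) := by rw [hβ]; ring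
  have hp : α * β = (((l : ℕ) : ℤ) : ℂ) := by rw [hβ]; linear_combination -hα
  have key : ∀ ζ : ℂ, Polynomial.aeval ζ f = (α - ζ) * (β - ζ) := by
    intro ζ
    rw [hf, hβ]
    simp only [map_add, map_sub, map_mul, map_pow, aeval_X, aeval_C, algebraMap_int_eq,
      Int.coe_castRingHom]
    push_cast
    linear_combination hα
  have ht := trSeq_cast a l α β hs hp N
  unfold cyclicResultantC
  rw [Multiset.map_congr rfl (fun ζ _ => key ζ), Multiset.prod_map_mul,
    prod_root_sub N hN α, prod_root_sub N hN β]
  have hmul : α ^ N * β ^ N = ((l : ℕ) : ℂ) ^ N := by rw [← mul_pow, hp]; push_cast; ring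
  push_cast
  push_cast at ht
  rw [ht]
  linear_combination hmul

lemma trSeq_zero_odd (m : ℤ) : ∀ j : ℕ, trSeq 0 m (2 * j + 1) = 0 := by
  intro j
  induction j with
  | zero => simp [trSeq]
  | succ j ih =>
    have : 2 * (j + 1) + 1 = (2 * j + 1) + 2 := by ring
    rw [this, show trSeq 0 m ((2*j+1)+2) = 0 * trSeq 0 m ((2*j+1)+1) - m * trSeq 0 m (2*j+1)
      from rfl, ih]
    ring

/-- Let `l ≥ 5` be prime, `a ∈ ℤ` with `a² ≤ 4l`, and
`f(t) = t² − a·t + l` (a Frobenius polynomial). Then `lim_n Res(t^{l^n} − 1, f)` exists in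
`ℤ_l`, and the limit equals `1` iff `a = 0` (the supersingular case). -/
theorem frobenius_polynomial_cyclic_resultants_supersingular
    (l : ℕ) [hl : Fact l.Prime] (hl5 : 5 ≤ l)
    (a : ℤ) (ha : a ^ 2 ≤ 4 * l)
    (f : Polynomial ℤ)
    (hf : f = Polynomial.X ^ 2 - Polynomial.C a * Polynomial.X + Polynomial.C (l : ℤ))
    (R : ℕ → ℤ) (hR : ∀ n, ((R n : ℤ) : ℂ) = cyclicResultantC (l ^ n) f) :
    ∃ L : ℤ_[l], Tendsto (fun n => ((R n : ℤ_[l]))) atTop (𝓝 L) ∧ (L = 1 ↔ a = 0) := by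
  have hlpos : 0 < l := hl.out.pos
  have hRf : ∀ n, R n = (l : ℤ) ^ (l ^ n) + 1 - trSeq a l (l ^ n) := by
    intro n
    have h := (hR n).trans (cyclicResultantC_eq l a f hf (l ^ n) (pow_ne_zero _ hlpos.ne'))
    exact_mod_cast h
  have hlpown : Tendsto (fun n => (l : ℤ_[l]) ^ (l ^ n)) atTop (𝓝 0) := by
    have h1 : ‖(l : ℤ_[l])‖ < 1 := by
      rw [PadicInt.norm_p]
      rw [inv_lt_one_iff₀]
      right; exact_mod_cast hl.out.one_lt
    exact (tendsto_pow_atTop_nhds_zero_of_norm_lt_one h1).comp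
      (tendsto_pow_atTop_atTop_of_one_lt hl.out.one_lt)
  by_cases ha0 : a = 0
  · subst ha0
    refine ⟨1, ?_, by simp⟩
    have hodd : ∀ n, trSeq 0 l (l ^ n) = 0 := by
      intro n
      obtain ⟨j, hj⟩ := (hl.out.odd_of_ne_two (by omega)).pow (n := n)
      rw [show l ^ n = 2 * j + 1 by omega]
      exact trSeq_zero_odd l j
    have hfun : (fun n => ((R n : ℤ_[l]))) = fun n => (l : ℤ_[l]) ^ (l ^ n) + 1 := by
      funext n
      rw [hRf n, hodd n]
      push_cast
      ring
    rw [hfun]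
    simpa using hlpown.add (tendsto_const_nhds (x := (1 : ℤ_[l])))
  · -- a ≠ 0 : Hensel lifting of the unit root
    have hal : ¬ ((l : ℤ) ∣ a) := by
      intro h
      have h1 : (l : ℤ) ≤ |a| := Int.le_of_dvd (abs_pos.mpr ha0) ((dvd_abs _ _).mpr h)
      have h2 : (l : ℤ) * l ≤ |a| * |a| :=
        mul_le_mul h1 h1 (by positivity) (abs_nonneg a)
      have h3 : |a| * |a| = a ^ 2 := by rw [← abs_mul, abs_mul_self, sq]
      have h5 : (5 : ℤ) ≤ l := by exact_mod_cast hl5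
      nlinarith
    have hnorma : ‖((a : ℤ) : ℤ_[l])‖ = 1 := by
      have hlt : ¬ ‖((a : ℤ) : ℤ_[l])‖ < 1 := fun h =>
        hal ((PadicInt.norm_int_lt_one_iff_dvd a).mp h)
      exact le_antisymm (PadicInt.norm_le_one _) (not_lt.mp hlt)
    set F : Polynomial ℤ_[l] :=
      X ^ 2 - C ((a : ℤ) : ℤ_[l]) * X + C ((l : ℕ) : ℤ_[l]) with hF
    have hFeval : ∀ x : ℤ_[l], F.eval x = x ^ 2 - ((a : ℤ) : ℤ_[l]) * x + ((l : ℕ) : ℤ_[l]) := by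
      intro x
      simp [hF]
    have hFdeval : ∀ x : ℤ_[l], F.derivative.eval x = 2 * x - ((a : ℤ) : ℤ_[l]) := by
      intro x
      simp [hF, one_add_one_eq_two]
    have hnormF : ‖F.eval ((a : ℤ) : ℤ_[l])‖ < ‖F.derivative.eval ((a : ℤ) : ℤ_[l])‖ ^ 2 := by
      rw [hFeval, hFdeval, show (2 : ℤ_[l]) * ((a : ℤ) : ℤ_[l]) - ((a : ℤ) : ℤ_[l])
        = ((a : ℤ) : ℤ_[l]) by ring, hnorma,
        show ((a : ℤ) : ℤ_[l]) ^ 2 - ((a : ℤ) : ℤ_[l]) * ((a : ℤ) : ℤ_[l]) + ((l : ℕ) : ℤ_[l])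
        = ((l : ℕ) : ℤ_[l]) by ring, PadicInt.norm_p]
      have : (1 : ℝ) < l := by exact_mod_cast hl.out.one_lt
      rw [one_pow, inv_lt_one_iff₀]
      right; exact this
    obtain ⟨u, huroot, hudist, -, -⟩ := hensels_lemma hnormF
    have hueq : u ^ 2 - ((a : ℤ) : ℤ_[l]) * u + ((l : ℕ) : ℤ_[l]) = 0 := by
      rw [← hFeval]; exact huroot
    have hudist1 : ‖u - ((a : ℤ) : ℤ_[l])‖ < 1 := by
      rwa [coe_aeval_eq_eval, hFdeval, show (2 : ℤ_[l]) * ((a : ℤ) : ℤ_[l]) - ((a : ℤ) : ℤ_[l])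
        = ((a : ℤ) : ℤ_[l]) by ring, hnorma] at hudist
    have hunorm : ‖u‖ = 1 := by
      refine le_antisymm (PadicInt.norm_le_one _) (not_lt.mp fun hu1 => ?_)
      have h2 := PadicInt.nonarchimedean u (((a : ℤ) : ℤ_[l]) - u)
      rw [show u + (((a : ℤ) : ℤ_[l]) - u) = ((a : ℤ) : ℤ_[l]) by ring] at h2
      rw [hnorma, ← norm_sub_rev u] at h2
      rcases max_cases ‖u‖ ‖u - ((a : ℤ) : ℤ_[l])‖ with ⟨he, _⟩ | ⟨he, _⟩ <;>
        rw [he] at h2 <;> linarith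
    set v : ℤ_[l] := ((a : ℤ) : ℤ_[l]) - u with hv
    have hsum : u + v = ((a : ℤ) : ℤ_[l]) := by rw [hv]; ring
    have hprod : u * v = (((l : ℕ) : ℤ) : ℤ_[l]) := by
      rw [hv]; push_cast; linear_combination -hueq
    have htr : ∀ k, ((trSeq a l k : ℤ) : ℤ_[l]) = u ^ k + v ^ k :=
      trSeq_cast a l u v hsum hprod
    have hvnorm : ‖v‖ = (l : ℝ)⁻¹ := by
      have h := congrArg norm hprod
      rw [norm_mul, hunorm, one_mul] at h
      rw [h]
      push_cast
      exact PadicInt.norm_p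
    have hvlt : ‖v‖ < 1 := by
      rw [hvnorm, inv_lt_one_iff₀]
      right; exact_mod_cast hl.out.one_lt
    have hvpow : Tendsto (fun n => v ^ (l ^ n)) atTop (𝓝 0) :=
      (tendsto_pow_atTop_nhds_zero_of_norm_lt_one hvlt).comp
        (tendsto_pow_atTop_atTop_of_one_lt hl.out.one_lt)
    have hfermat : (l : ℤ_[l]) ∣ u ^ l - u := by
      have h0 : (PadicInt.toZMod (u ^ l - u) : ZMod l) = 0 := by
        rw [map_sub, map_pow, ZMod.pow_card, sub_self]
      rwa [← RingHom.mem_ker, PadicInt.ker_toZMod, PadicInt.maximalIdeal_eq_span_p,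
        Ideal.mem_span_singleton] at h0
    have hdvd : ∀ n : ℕ, (l : ℤ_[l]) ^ (n + 1) ∣ u ^ (l ^ (n + 1)) - u ^ (l ^ n) := by
      intro n
      have h := dvd_sub_pow_of_dvd_sub (p := l) hfermat n
      rwa [← pow_mul, ← pow_succ'] at h
    have hdist : ∀ n : ℕ, dist (u ^ (l ^ n)) (u ^ (l ^ (n + 1))) ≤ (l : ℝ)⁻¹ * ((l : ℝ)⁻¹) ^ n := by
      intro n
      rw [dist_eq_norm, norm_sub_rev]
      have h := (PadicInt.norm_le_pow_iff_mem_span_pow (u ^ (l ^ (n + 1)) - u ^ (l ^ n)) (n + 1)).mpr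
        (by rw [Ideal.mem_span_singleton]; exact hdvd n)
      refine h.trans (le_of_eq ?_)
      rw [zpow_neg, zpow_natCast, pow_succ', mul_inv, inv_pow]
    have hcauchy : CauchySeq (fun n => u ^ (l ^ n)) := by
      refine cauchySeq_of_le_geometric ((l : ℝ)⁻¹) ((l : ℝ)⁻¹) ?_ hdist
      rw [inv_lt_one_iff₀]; right; exact_mod_cast hl.out.one_lt
    obtain ⟨L', hL'⟩ := cauchySeq_tendsto_of_complete hcauchy
    have hL'norm : ‖L'‖ = 1 := by
      have h1 : Tendsto (fun n => ‖u ^ (l ^ n)‖) atTop (𝓝 ‖L'‖) := hL'.norm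
      have h2 : (fun n : ℕ => ‖u ^ (l ^ n)‖) = fun _ => (1 : ℝ) :=
        funext fun n => by rw [norm_pow, hunorm, one_pow]
      rw [h2] at h1
      exact tendsto_nhds_unique h1 tendsto_const_nhds
    have hL'ne : L' ≠ 0 := by
      intro h
      rw [h, norm_zero] at hL'norm
      norm_num at hL'norm
    refine ⟨1 - L', ?_, ?_⟩
    · have hfun : (fun n => ((R n : ℤ_[l])))
          = fun n => (l : ℤ_[l]) ^ (l ^ n) + 1 - (u ^ (l ^ n) + v ^ (l ^ n)) := by
        funext n
        rw [hRf n]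
        push_cast
        rw [← htr (l ^ n)]

      rw [hfun]
      have h := (hlpown.add (tendsto_const_nhds (x := (1 : ℤ_[l])))).sub (hL'.add hvpow)
      simpa using h
    · simp only [ha0, iff_false]
      intro h
      exact hL'ne (sub_eq_self.mp h)
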